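/- For every integer d ≥ 1, the maximum number of strings in S^d such that every two of them are at distance exactly one equals d+1; that is, n(1,d) = d+1. -/

import Mathlib

/-- The three-letter alphabet `S = {0, 1, ∗}`. -/
inductive Tern | zero | one | star
deriving DecidableEq

instance : Fintype Tern where
  elems := {Tern.zero, Tern.one, Tern.star}
  complete := by intro x; cases x <;> simp

/-- `clash x y` is true iff both `x, y ∈ {0,1}` and `x ≠ y`. -/
def clash : Tern → Tern → Bool
  | Tern.zero, Tern.one => true
  | Tern.one, Tern.zero => true
  | _, _ => false

/-- `dist u v`: the number of positions where both letters are binary and they differ. -/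
def dist {d : ℕ} (u v : Fin d → Tern) : ℕ :=
  (Finset.univ.filter (fun i => clash (u i) (v i))).card

/-- A `k`-neighborly code in `S^d`: every two distinct members `u, v`
satisfy `1 ≤ dist(u,v) ≤ k`. -/
def IsNeighborlyCode (k d : ℕ) (V : Finset (Fin d → Tern)) : Prop :=
  ∀ u ∈ V, ∀ v ∈ V, u ≠ v → 1 ≤ dist u v ∧ dist u v ≤ k

/-- `n(k,d)`: the maximum size of a `k`-neighborly code in `S^d`. -/
noncomputable def nMax (k d : ℕ) : ℕ :=
  sSup {m : ℕ | ∃ V : Finset (Fin d → Tern), IsNeighborlyCode k d V ∧ V.card = m}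

open Finset

lemma clash_self (x : Tern) : clash x x = false := by cases x <;> rfl

lemma clash_comm (x y : Tern) : clash x y = clash y x := by cases x <;> cases y <;> rfl

lemma distSelf {d : ℕ} (u : Fin d → Tern) : _root_.dist u u = 0 := by
  simp [_root_.dist, clash_self]

lemma distComm {d : ℕ} (u v : Fin d → Tern) : _root_.dist u v = _root_.dist v u := by
  unfold _root_.dist
  congr 1
  ext i
  simp [clash_comm (u i) (v i)]

/-! ### Lower bound construction -/

/-- Codeword `j` : ones before position `j`, zero at position `j`, stars after. -/
def cw (d : ℕ) (j : Fin (d+1)) : Fin d → Tern := fun i =>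
  if (i : ℕ) < (j : ℕ) then Tern.one
  else if (i : ℕ) = (j : ℕ) then Tern.zero
  else Tern.star

lemma clash_cw {d : ℕ} {j k : Fin (d+1)} (h : (j : ℕ) < (k : ℕ)) (i : Fin d) :
    clash (cw d j i) (cw d k i) = true ↔ (i : ℕ) = (j : ℕ) := by
  simp only [cw]
  split_ifs <;> simp [clash] <;> omega

lemma dist_cw_lt {d : ℕ} {j k : Fin (d+1)} (h : (j : ℕ) < (k : ℕ)) :
    _root_.dist (cw d j) (cw d k) = 1 := by
  have hj : (j : ℕ) < d := lt_of_lt_of_le h (Nat.lt_succ_iff.mp k.isLt)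
  have hset : (Finset.univ.filter (fun i => clash (cw d j i) (cw d k i)))
      = {(⟨(j : ℕ), hj⟩ : Fin d)} := by
    ext i
    simp only [mem_filter, mem_univ, true_and, mem_singleton, Fin.ext_iff]
    exact clash_cw h i
  simp [_root_.dist, hset]

lemma dist_cw {d : ℕ} {j k : Fin (d+1)} (h : j ≠ k) :
    _root_.dist (cw d j) (cw d k) = 1 := by
  rcases lt_or_gt_of_ne (fun hv => h (Fin.ext hv) : (j : ℕ) ≠ (k : ℕ)) with hlt | hgt
  · exact dist_cw_lt hlt
  · rw [distComm]; exact dist_cw_lt hgt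

lemma cw_injective (d : ℕ) : Function.Injective (cw d) := by
  intro j k h
  by_contra hne
  have h1 := dist_cw (d := d) hne
  rw [h, distSelf] at h1
  exact absurd h1 (by norm_num)

lemma lower_bound (d : ℕ) :
    ∃ V : Finset (Fin d → Tern), IsNeighborlyCode 1 d V ∧ V.card = d + 1 := by
  refine ⟨Finset.univ.image (cw d), ?_, ?_⟩
  · intro u hu v hv huv
    obtain ⟨j, -, rfl⟩ := Finset.mem_image.mp hu
    obtain ⟨k, -, rfl⟩ := Finset.mem_image.mp hv
    have hjk : j ≠ k := fun h => huv (by rw [h])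
    rw [dist_cw hjk]
    exact ⟨le_refl 1, le_refl 1⟩
  · rw [Finset.card_image_of_injective _ (cw_injective d)]
    simp

/-! ### Upper bound -/

/-- `sv u i` is `1` if `u i` is binary, `0` if it is a star. -/
noncomputable def sv {d : ℕ} (u : Fin d → Tern) (i : Fin d) : ℝ :=
  match u i with
  | Tern.star => 0
  | _ => 1

/-- `tv u i` is `1`, `-1`, `0` according as `u i` is one, zero, star. -/
noncomputable def tv {d : ℕ} (u : Fin d → Tern) (i : Fin d) : ℝ :=
  match u i with
  | Tern.one => 1
  | Tern.zero => -1
  | Tern.star => 0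

lemma sv_tv_pointwise {d : ℕ} (u w : Fin d → Tern) (i : Fin d) :
    sv u i * sv w i = tv u i * tv w i + (if clash (u i) (w i) then (2:ℝ) else 0) := by
  cases hu : u i <;> cases hw : w i <;> simp [sv, tv, clash, hu, hw] <;> norm_num

lemma sum_sv_sv {d : ℕ} (u w : Fin d → Tern) :
    ∑ i, sv u i * sv w i = (∑ i, tv u i * tv w i) + 2 * (_root_.dist u w : ℝ) := by
  have h : ∑ i, sv u i * sv w i
      = ∑ i, (tv u i * tv w i + (if clash (u i) (w i) then (2:ℝ) else 0)) :=
    Finset.sum_congr rfl fun i _ => sv_tv_pointwise u w i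
  rw [h, Finset.sum_add_distrib]
  congr 1
  rw [Finset.sum_ite, Finset.sum_const, Finset.sum_const_zero, add_zero]
  simp [_root_.dist, mul_comm]

lemma double_sum_factor {d : ℕ} {α : Type*} [Fintype α] (g : α → ℝ)
    (f1 f2 : α → Fin d → ℝ) :
    ∑ u, ∑ w, g u * g w * (∑ i, f1 u i * f2 w i)
      = ∑ i, (∑ u, g u * f1 u i) * (∑ w, g w * f2 w i) := by
  have h1 : ∀ u w : α, g u * g w * (∑ i, f1 u i * f2 w i)
      = ∑ i, (g u * f1 u i) * (g w * f2 w i) := by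
    intro u w
    rw [Finset.mul_sum]
    exact Finset.sum_congr rfl fun i _ => by ring
  calc ∑ u, ∑ w, g u * g w * (∑ i, f1 u i * f2 w i)
      = ∑ u, ∑ w, ∑ i, (g u * f1 u i) * (g w * f2 w i) :=
        Finset.sum_congr rfl fun u _ => Finset.sum_congr rfl fun w _ => h1 u w
    _ = ∑ u, ∑ i, ∑ w, (g u * f1 u i) * (g w * f2 w i) :=
        Finset.sum_congr rfl fun u _ => Finset.sum_comm
    _ = ∑ i, ∑ u, ∑ w, (g u * f1 u i) * (g w * f2 w i) := Finset.sum_comm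
    _ = ∑ i, (∑ u, g u * f1 u i) * (∑ w, g w * f2 w i) :=
        Finset.sum_congr rfl fun i _ => (Finset.sum_mul_sum _ _ _ _).symm

lemma upper_bound {d : ℕ} (V : Finset (Fin d → Tern)) (hV : IsNeighborlyCode 1 d V) :
    V.card ≤ d + 1 := by
  by_contra hcard
  push_neg at hcard
  -- the family u ↦ (tv u, 1) in ℝ^d × ℝ must be linearly dependent
  have hfr : Module.finrank ℝ ((Fin d → ℝ) × ℝ) = d + 1 := by
    simp [Module.finrank_prod]
  have hnli : ¬ LinearIndependent ℝ
      (fun u : ↥V => ((tv (u : Fin d → Tern), 1) : (Fin d → ℝ) × ℝ)) := by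
    intro hli
    have := hli.fintype_card_le_finrank
    rw [hfr, Fintype.card_coe] at this
    omega
  obtain ⟨g, hg, u0, hu0⟩ := Fintype.not_linearIndependent_iff.mp hnli
  -- extract the two linear relations
  have hgsum : ∑ u : ↥V, g u = 0 := by
    have h2 := congrArg Prod.snd hg
    rw [Prod.snd_sum] at h2
    simpa using h2
  have hgt : ∀ i : Fin d, ∑ u : ↥V, g u * tv (u : Fin d → Tern) i = 0 := by
    intro i
    have h1 := congrArg Prod.fst hg
    rw [Prod.fst_sum] at h1
    have h2 := congrFun h1 i
    simpa using h2
  -- distances within V are exactly 1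
  have hdist : ∀ u w : ↥V, ((_root_.dist (u : Fin d → Tern) w : ℕ) : ℝ)
      = if u = w then 0 else 1 := by
    intro u w
    by_cases h : u = w
    · simp [h, distSelf]
    · have hne : (u : Fin d → Tern) ≠ (w : Fin d → Tern) := fun he => h (Subtype.ext he)
      obtain ⟨h1, h2⟩ := hV u u.2 w w.2 hne
      have h3 : _root_.dist (u : Fin d → Tern) w = 1 := le_antisymm h2 h1
      simp [h, h3]
  -- the quadratic form Q
  set Q : ℝ := ∑ u : ↥V, ∑ w : ↥V, g u * g w
      * (∑ i, sv (u : Fin d → Tern) i * sv (w : Fin d → Tern) i) with hQ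
  have hQnonneg : 0 ≤ Q := by
    rw [hQ, double_sum_factor g _ _]
    exact Finset.sum_nonneg fun i _ => mul_self_nonneg _
  -- split each summand
  have hsplit : ∀ u w : ↥V,
      g u * g w * (∑ i, sv (u : Fin d → Tern) i * sv (w : Fin d → Tern) i)
        = g u * g w * (∑ i, tv (u : Fin d → Tern) i * tv (w : Fin d → Tern) i)
          + (2 * (g u * g w) - (if u = w then 2 * (g u * g u) else 0)) := by
    intro u w
    rw [sum_sv_sv, hdist u w]
    by_cases h : u = w
    · subst h; rw [if_pos rfl, if_pos rfl]; ring
    · rw [if_neg h, if_neg h]; ring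
  have hT : ∑ u : ↥V, ∑ w : ↥V,
      g u * g w * (∑ i, tv (u : Fin d → Tern) i * tv (w : Fin d → Tern) i) = 0 := by
    rw [double_sum_factor g _ _]
    exact Finset.sum_eq_zero fun i _ => by rw [hgt i]; ring
  have hA : ∑ u : ↥V, ∑ w : ↥V, 2 * (g u * g w) = 0 := by
    have : ∀ u : ↥V, ∑ w : ↥V, 2 * (g u * g w) = 2 * g u * ∑ w : ↥V, g w := by
      intro u
      rw [Finset.mul_sum]
      exact Finset.sum_congr rfl fun w _ => by ring
    rw [Finset.sum_congr rfl fun u _ => this u]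
    simp only [hgsum, mul_zero, Finset.sum_const_zero]
  have hB : ∀ u : ↥V, ∑ w : ↥V, (if u = w then 2 * (g u * g u) else 0)
      = 2 * (g u * g u) := by
    intro u
    rw [Finset.sum_ite_eq]
    simp
  have hQ2 : Q = -(2 * ∑ u : ↥V, g u * g u) := by
    rw [hQ, Finset.sum_congr rfl fun u _ => Finset.sum_congr rfl fun w _ => hsplit u w]
    simp_rw [Finset.sum_add_distrib, Finset.sum_sub_distrib]
    rw [hT, hA, Finset.sum_congr rfl fun u (_ : u ∈ Finset.univ) => hB u]
    rw [Finset.mul_sum]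
    simp [Finset.sum_sub_distrib]
  have hpos : 0 < ∑ u : ↥V, g u * g u := by
    have h1 : 0 < g u0 * g u0 := mul_self_pos.mpr hu0
    exact lt_of_lt_of_le h1
      (Finset.single_le_sum (fun u _ => mul_self_nonneg (g u)) (Finset.mem_univ u0))
  rw [hQ2] at hQnonneg
  nlinarith

/-- Zaks' theorem: for every `d ≥ 1`, the maximum number of strings in `S^d`,
every two of which are at distance exactly one, equals `d + 1`; i.e. `n(1,d) = d+1`. -/
theorem n_one_eq (d : ℕ) (hd : 1 ≤ d) : nMax 1 d = d + 1 := by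
  obtain ⟨V₀, hV₀, hc₀⟩ := lower_bound d
  have hmem : d + 1 ∈ {m : ℕ | ∃ V : Finset (Fin d → Tern), IsNeighborlyCode 1 d V ∧ V.card = m} :=
    ⟨V₀, hV₀, hc₀⟩
  have hub : ∀ m ∈ {m : ℕ | ∃ V : Finset (Fin d → Tern), IsNeighborlyCode 1 d V ∧ V.card = m},
      m ≤ d + 1 := by
    rintro m ⟨V, hV, rfl⟩
    exact upper_bound V hV
  exact le_antisymm (csSup_le ⟨d + 1, hmem⟩ hub) (le_csSup ⟨d + 1, hub⟩ hmem)
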